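/- Let k > 0, t₀ ∈ ℝ, and θ₀ ∈ (−π/2, 0). Let θ be the solution of θ'(t) = k·sin(θ(t)) with θ(t₀) = θ₀. Then there exists a finite time t₁ = t₀ + (1/k)·ln(csc(|θ₀|) + cot(|θ₀|)) > t₀ such that θ(t₁) = −π/2. -/

import Mathlib

open Real

/-- Instability for negative bare mass: a solution of `θ' = k sin θ` (`k = a²/(2|m|) > 0`)
starting at `θ₀ ∈ (−π/2, 0)` reaches `−π/2` at the finite time
`t₁ = t₀ + (1/k)·ln(csc|θ₀| + cot|θ₀|)`. -/
theorem theta_reaches_neg_pi_div_two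
    (k t₀ θ₀ t₁ : ℝ) (hk : 0 < k) (hθ₀ : θ₀ ∈ Set.Ioo (-(π / 2)) 0)
    (ht₁ : t₁ = t₀ + (1 / k) * Real.log (1 / sin |θ₀| + cos |θ₀| / sin |θ₀|))
    (θ : ℝ → ℝ) (hinit : θ t₀ = θ₀)
    (hode : ∀ t ∈ Set.Icc t₀ t₁, HasDerivAt θ (k * sin (θ t)) t) :
    t₀ < t₁ ∧ θ t₁ = -(π / 2) := by
  obtain ⟨hθ₀l, hθ₀r⟩ := hθ₀
  set φ := |θ₀| with hφdef
  have hφ : φ = -θ₀ := abs_of_neg hθ₀r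
  have hφ0 : 0 < φ := by rw [hφ]; linarith
  have hφπ : φ < π / 2 := by rw [hφ]; linarith
  have hsφ : 0 < sin φ := sin_pos_of_pos_of_lt_pi hφ0 (by linarith [pi_pos])
  have hcφ : 0 < cos φ := cos_pos_of_mem_Ioo ⟨by linarith, hφπ⟩
  have hsφ1 : sin φ ≤ 1 := sin_le_one φ
  -- the argument of the log
  set X : ℝ := 1 / sin φ + cos φ / sin φ with hXdef
  have hX : X = (1 + cos φ) / sin φ := by rw [hXdef]; ring
  have hX1 : 1 < X := by
    rw [hX, lt_div_iff₀ hsφ, one_mul]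
    linarith
  have hlog : 0 < Real.log X := Real.log_pos hX1
  have ht₀t₁ : t₀ < t₁ := by
    rw [ht₁]
    have : 0 < (1 / k) * Real.log X := by positivity
    linarith
  refine ⟨ht₀t₁, ?_⟩
  -- half-angle facts
  have hφ2l : 0 < φ / 2 := by linarith
  have hφ2r : φ / 2 < π / 2 := by linarith [pi_pos]
  have hs2 : 0 < sin (φ / 2) := sin_pos_of_pos_of_lt_pi hφ2l (by linarith [pi_pos])
  have hc2 : 0 < cos (φ / 2) := cos_pos_of_mem_Ioo ⟨by linarith, hφ2r⟩
  set C : ℝ := tan (φ / 2) with hCdef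
  have hC : 0 < C := tan_pos_of_pos_of_lt_pi_div_two hφ2l hφ2r
  -- explicit solution
  set u : ℝ → ℝ := fun t => C * Real.exp (k * (t - t₀)) with hudef
  set ψ : ℝ → ℝ := fun t => -(2 * arctan (u t)) with hψdef
  have hu : ∀ t, HasDerivAt u (k * u t) t := by
    intro t
    have h1 : HasDerivAt (fun t : ℝ => k * (t - t₀)) k t := by
      simpa using ((hasDerivAt_id t).sub_const t₀).const_mul k
    have h2 := (h1.exp).const_mul C
    refine h2.congr_deriv ?_
    show C * (Real.exp (k * (t - t₀)) * k) = k * (C * Real.exp (k * (t - t₀))); ring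
  have hupos : ∀ t, 0 < u t := fun t => by positivity
  have hψ' : ∀ t, HasDerivAt ψ (k * sin (ψ t)) t := by
    intro t
    have harc : HasDerivAt (fun t => arctan (u t)) (1 / (1 + u t ^ 2) * (k * u t)) t :=
      (Real.hasDerivAt_arctan (u t)).comp t (hu t)
    have h2 : HasDerivAt ψ (-(2 * (1 / (1 + u t ^ 2) * (k * u t)))) t := by
      exact (harc.const_mul 2).neg
    convert h2 using 1
    have hsin : sin (ψ t) = -(2 * (u t / (1 + u t ^ 2))) := by
      have h1u : (0:ℝ) < 1 + u t ^ 2 := by positivity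
      have hsq : Real.sqrt (1 + u t ^ 2) * Real.sqrt (1 + u t ^ 2) = 1 + u t ^ 2 :=
        Real.mul_self_sqrt (by positivity)
      have : ψ t = -(2 * arctan (u t)) := rfl
      rw [this, sin_neg, show (2 : ℝ) * arctan (u t) = 2 * arctan (u t) from rfl,
        Real.sin_two_mul, Real.sin_arctan, Real.cos_arctan]
      have hsqrtpos : 0 < Real.sqrt (1 + u t ^ 2) := Real.sqrt_pos.mpr h1u
      field_simp
      rw [sq_sqrt h1u.le]
    rw [hsin]
    ring
  have hψinit : ψ t₀ = θ₀ := by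
    have : u t₀ = C := by simp [hudef]
    rw [hψdef]
    simp only [this]
    rw [hCdef, Real.arctan_tan (by linarith) hφ2r]
    rw [hφ] at *
    ring_nf
  -- ψ t₁ = -(π/2)
  have hut₁ : u t₁ = 1 := by
    have hkt : k * (t₁ - t₀) = Real.log X := by
      rw [ht₁]; field_simp; ring
    have : u t₁ = C * X := by
      rw [hudef]
      simp only
      rw [hkt, Real.exp_log (by positivity)]
    rw [this, hX, hCdef]
    have hsin2 : sin φ = 2 * sin (φ / 2) * cos (φ / 2) := by
      rw [show φ = 2 * (φ / 2) by ring, Real.sin_two_mul]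
      ring_nf
    have hcos2 : 1 + cos φ = 2 * cos (φ / 2) ^ 2 := by
      have := Real.cos_sq (φ / 2)
      rw [show 2 * (φ / 2) = φ by ring] at this
      linarith
    rw [Real.tan_eq_sin_div_cos, hsin2, hcos2]
    field_simp
  have hψt₁ : ψ t₁ = -(π / 2) := by
    rw [hψdef]
    simp only [hut₁, Real.arctan_one]
    ring
  -- uniqueness of ODE solutions
  have hK : ∀ s : ℝ, LipschitzWith k.toNNReal (fun x : ℝ => k * sin x) := by
    intro s
    rw [← lipschitzOnWith_univ]
    apply Convex.lipschitzOnWith_of_nnnorm_hasDerivWithin_le (f' := fun x => k * cos x) convex_univ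
    · intro x _
      exact ((Real.hasDerivAt_sin x).const_mul k).hasDerivWithinAt
    · intro x _
      rw [← NNReal.coe_le_coe, coe_nnnorm, Real.coe_toNNReal _ hk.le]
      rw [Real.norm_eq_abs, abs_mul, abs_of_pos hk]
      nlinarith [abs_cos_le_one x, abs_nonneg (cos x), hk.le]
  have huniq : Set.EqOn θ ψ (Set.Icc t₀ t₁) := by
    apply ODE_solution_unique (v := fun _ x => k * sin x) (K := k.toNNReal) hK
    · intro t ht
      exact (hode t ht).continuousAt.continuousWithinAt
    · intro t ht
      exact (hode t (Set.mem_Icc_of_Ico ht)).hasDerivWithinAt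
    · intro t ht
      exact (hψ' t).continuousAt.continuousWithinAt
    · intro t ht
      exact (hψ' t).hasDerivWithinAt
    · rw [hinit, hψinit]
  have := huniq (Set.right_mem_Icc.mpr ht₀t₁.le)
  rw [this, hψt₁]
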